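/- arXiv:1502.03316 — 2 statements merged into one kernel-verified Lean document; each statement's English description precedes it below -/
import Mathlib

section
/- Let H be a finite simple d-regular graph on n vertices with adjacency matrix A_H satisfying |pᵀ A_H p| ≤ λ·‖p‖² for every p ∈ ℝ^n orthogonal to the all-ones vector, where 0 < λ < d/4. Let B be a nonempty set of vertices of H with |B| ≤ (λ/d)·n, and let N(B) denote the set of all vertices of H having a neighbor in B. Then |N(B)| ≥ (d/(2λ))·|B|. -/
open Matrix Finset

set_option maxHeartbeats 1000000

/-- Let `H` be a `d`-regular graph on `n` vertices whose adjacency matrix satisfies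
`|pᵀ A_H p| ≤ λ‖p‖²` for every `p` orthogonal to the all-ones vector, with `0 < λ < d/4`.
If `B` is a nonempty set of vertices with `|B| ≤ (λ/d)·n`, then its neighborhood satisfies
`|N(B)| ≥ (d/(2λ))·|B|`. -/
theorem expander_small_set_neighborhood {U : Type*} [Fintype U] [DecidableEq U]
    (H : SimpleGraph U) [DecidableRel H.Adj]
    (d : ℕ) (hreg : H.IsRegularOfDegree d) (lam : ℝ)
    (hspec : ∀ p : U → ℝ, ∑ i, p i = 0 →
      abs (p ⬝ᵥ (H.adjMatrix ℝ *ᵥ p)) ≤ lam * ∑ i, (p i) ^ 2)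
    (hlam0 : 0 < lam) (hlam : lam < (d : ℝ) / 4)
    (B : Finset U) (hBne : B.Nonempty)
    (hB : (B.card : ℝ) ≤ (lam / d) * (Fintype.card U : ℝ)) :
    ((d : ℝ) / (2 * lam)) * (B.card : ℝ) ≤
      ((Finset.univ.filter fun v => ∃ u ∈ B, H.Adj u v).card : ℝ) := by
  classical
  obtain ⟨v₀, hv₀⟩ := hBne
  set Nb : Finset U := Finset.univ.filter fun v => ∃ u ∈ B, H.Adj u v with hNb
  have hcardU : 0 < Fintype.card U := Fintype.card_pos_iff.mpr ⟨v₀⟩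
  set n : ℝ := (Fintype.card U : ℝ) with hn
  set b : ℝ := (B.card : ℝ) with hb
  set m : ℝ := (Nb.card : ℝ) with hm
  have hnpos : 0 < n := by rw [hn]; exact_mod_cast hcardU
  have hb0 : (0:ℝ) ≤ b := by rw [hb]; positivity
  have hm0 : (0:ℝ) ≤ m := by rw [hm]; positivity
  -- the entries of the adjacency matrix
  set a : U → U → ℝ := fun i j => if H.Adj i j then 1 else 0 with ha
  have hsa : ∀ i j, a i j = a j i := by
    intro i j
    simp only [ha]
    by_cases h : H.Adj i j
    · simp [h, h.symm]
    · have h' : ¬ H.Adj j i := fun hji => h hji.symm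
      simp [h, h']
  have hrow : ∀ i, ∑ j, a i j = (d : ℝ) := by
    intro i
    simp only [ha]
    rw [Finset.sum_boole, ← SimpleGraph.neighborFinset_eq_filter]
    exact_mod_cast hreg i
  have hcol : ∀ j, ∑ i, a i j = (d : ℝ) := by
    intro j
    rw [Finset.sum_congr rfl fun i _ => hsa i j]
    exact hrow j
  -- indicator functions
  set χB : U → ℝ := fun i => if i ∈ B then 1 else 0 with hχB
  set χN : U → ℝ := fun i => if i ∈ Nb then 1 else 0 with hχN
  have hsB : ∑ i, χB i = b := by
    simp only [hχB]
    rw [Finset.sum_boole, hb]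
    norm_cast
    rw [Finset.filter_mem_eq_inter, Finset.univ_inter]
  have hsN : ∑ i, χN i = m := by
    simp only [hχN]
    rw [Finset.sum_boole, hm]
    norm_cast
    rw [Finset.filter_mem_eq_inter, Finset.univ_inter]
  have hsqB : ∀ i, χB i ^ 2 = χB i := by
    intro i; simp only [hχB]; split <;> norm_num
  have hsqN : ∀ i, χN i ^ 2 = χN i := by
    intro i; simp only [hχN]; split <;> norm_num
  -- all neighbors of a vertex of B lie in Nb
  have hinner : ∀ i ∈ B, ∑ j, a i j * χN j = (d : ℝ) := by
    intro i hi
    have h1 : ∀ j, a i j * χN j = a i j := by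
      intro j
      by_cases hadj : H.Adj i j
      · have hjN : j ∈ Nb := by
          rw [hNb]
          exact Finset.mem_filter.mpr ⟨Finset.mem_univ j, ⟨i, hi, hadj⟩⟩
        simp [hχN, hjN]
      · simp [ha, hadj]
    rw [Finset.sum_congr rfl fun j _ => h1 j]
    exact hrow i
  -- the four basic double sums
  have hP1 : ∑ i, ∑ j, χB i * a i j * χN j = (d : ℝ) * b := by
    have h1 : ∀ i, (∑ j, χB i * a i j * χN j) = χB i * (d : ℝ) := by
      intro i
      by_cases hi : i ∈ B
      · rw [show (∑ j, χB i * a i j * χN j) = χB i * ∑ j, a i j * χN j by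
            rw [Finset.mul_sum]; exact Finset.sum_congr rfl fun j _ => by ring]
        rw [hinner i hi]
      · simp [hχB, hi]
    rw [Finset.sum_congr rfl fun i _ => h1 i, ← Finset.sum_mul, hsB]
    ring
  have hP2 : ∑ i, ∑ j, χB i * a i j = (d : ℝ) * b := by
    have h1 : ∀ i, (∑ j, χB i * a i j) = χB i * (d : ℝ) := by
      intro i
      rw [← Finset.mul_sum, hrow i]
    rw [Finset.sum_congr rfl fun i _ => h1 i, ← Finset.sum_mul, hsB]
    ring
  have hP3 : ∑ i, ∑ j, a i j * χN j = (d : ℝ) * m := by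
    rw [Finset.sum_comm]
    have h1 : ∀ j, (∑ i, a i j * χN j) = χN j * (d : ℝ) := by
      intro j
      rw [← Finset.sum_mul, hcol j]
      ring
    rw [Finset.sum_congr rfl fun j _ => h1 j, ← Finset.sum_mul, hsN]
    ring
  have hP4 : ∑ i, ∑ j, a i j = n * (d : ℝ) := by
    rw [Finset.sum_congr rfl fun i _ => hrow i, Finset.sum_const, Finset.card_univ,
      nsmul_eq_mul, ← hn]
  -- centered indicator vectors
  set c : ℝ := b / n with hc
  set e : ℝ := m / n with he
  set x : U → ℝ := fun i => χB i - c with hx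
  set y : U → ℝ := fun i => χN i - e with hy
  have hx0 : ∑ i, x i = 0 := by
    simp only [hx]
    rw [Finset.sum_sub_distrib, hsB, Finset.sum_const, Finset.card_univ, nsmul_eq_mul,
      ← hn, hc]
    field_simp
    ring
  have hy0 : ∑ i, y i = 0 := by
    simp only [hy]
    rw [Finset.sum_sub_distrib, hsN, Finset.sum_const, Finset.card_univ, nsmul_eq_mul,
      ← hn, he]
    field_simp
    ring
  have hxsq : ∑ i, (x i) ^ 2 ≤ b := by
    have h1 : ∑ i, (x i) ^ 2 = b - 2 * c * b + n * c ^ 2 := by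
      simp only [hx]
      rw [Finset.sum_congr rfl fun i _ => show (χB i - c) ^ 2
            = χB i - 2 * c * χB i + c ^ 2 by linear_combination hsqB i]
      rw [Finset.sum_add_distrib, Finset.sum_sub_distrib, hsB, ← Finset.mul_sum, hsB,
        Finset.sum_const, Finset.card_univ, nsmul_eq_mul, ← hn]
    rw [h1, hc]
    have h2 : b - 2 * (b / n) * b + n * (b / n) ^ 2 = b - b ^ 2 / n := by
      field_simp; ring
    rw [h2]
    nlinarith [sq_nonneg b, div_nonneg (sq_nonneg b) hnpos.le]
  have hysq : ∑ i, (y i) ^ 2 ≤ m := by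
    have h1 : ∑ i, (y i) ^ 2 = m - 2 * e * m + n * e ^ 2 := by
      simp only [hy]
      rw [Finset.sum_congr rfl fun i _ => show (χN i - e) ^ 2
            = χN i - 2 * e * χN i + e ^ 2 by linear_combination hsqN i]
      rw [Finset.sum_add_distrib, Finset.sum_sub_distrib, hsN, ← Finset.mul_sum, hsN,
        Finset.sum_const, Finset.card_univ, nsmul_eq_mul, ← hn]
    rw [h1, he]
    have h2 : m - 2 * (m / n) * m + n * (m / n) ^ 2 = m - m ^ 2 / n := by
      field_simp; ring
    rw [h2]
    nlinarith [div_nonneg (sq_nonneg m) hnpos.le]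
  -- value of the bilinear form on (x, y)
  have hTxy : ∑ i, ∑ j, x i * a i j * y j = (d : ℝ) * b - (d : ℝ) * b * m / n := by
    have hexp : ∀ i j, x i * a i j * y j
        = χB i * a i j * χN j - e * (χB i * a i j) - c * (a i j * χN j)
          + (c * e) * a i j := by
      intro i j; simp only [hx, hy]; ring
    calc ∑ i, ∑ j, x i * a i j * y j
        = (∑ i, ∑ j, χB i * a i j * χN j) - e * (∑ i, ∑ j, χB i * a i j)
          - c * (∑ i, ∑ j, a i j * χN j) + (c * e) * (∑ i, ∑ j, a i j) := by
          rw [Finset.sum_congr rfl fun i _ => Finset.sum_congr rfl fun j _ => hexp i j]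
          simp only [Finset.sum_add_distrib, Finset.sum_sub_distrib, ← Finset.mul_sum]
      _ = (d : ℝ) * b - (d : ℝ) * b * m / n := by
          rw [hP1, hP2, hP3, hP4, hc, he]
          field_simp
          ring
  -- the quadratic form as a double sum
  have hdot : ∀ p : U → ℝ, p ⬝ᵥ (H.adjMatrix ℝ *ᵥ p) = ∑ i, ∑ j, p i * a i j * p j := by
    intro p
    rw [dotProduct]
    refine Finset.sum_congr rfl fun i _ => ?_
    rw [SimpleGraph.adjMatrix_mulVec_apply, Finset.mul_sum,
      SimpleGraph.neighborFinset_eq_filter, Finset.sum_filter]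
    refine Finset.sum_congr rfl fun j _ => ?_
    simp only [ha]
    split <;> ring
  -- polarization
  set p1 : U → ℝ := fun i => x i + y i with hp1
  set p2 : U → ℝ := fun i => x i - y i with hp2
  have hp10 : ∑ i, p1 i = 0 := by
    simp only [hp1]; rw [Finset.sum_add_distrib, hx0, hy0]; ring
  have hp20 : ∑ i, p2 i = 0 := by
    simp only [hp2]; rw [Finset.sum_sub_distrib, hx0, hy0]; ring
  have hsymm : ∑ i, ∑ j, y i * a i j * x j = ∑ i, ∑ j, x i * a i j * y j := by
    rw [Finset.sum_comm]
    refine Finset.sum_congr rfl fun i _ => Finset.sum_congr rfl fun j _ => ?_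
    rw [hsa j i]; ring
  have hpol : (∑ i, ∑ j, p1 i * a i j * p1 j) - (∑ i, ∑ j, p2 i * a i j * p2 j)
      = 4 * ∑ i, ∑ j, x i * a i j * y j := by
    have h1 : ∀ i j, p1 i * a i j * p1 j - p2 i * a i j * p2 j
        = 2 * (x i * a i j * y j) + 2 * (y i * a i j * x j) := by
      intro i j; simp only [hp1, hp2]; ring
    calc (∑ i, ∑ j, p1 i * a i j * p1 j) - (∑ i, ∑ j, p2 i * a i j * p2 j)
        = ∑ i, ∑ j, (2 * (x i * a i j * y j) + 2 * (y i * a i j * x j)) := by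
          rw [← Finset.sum_sub_distrib]
          refine Finset.sum_congr rfl fun i _ => ?_
          rw [← Finset.sum_sub_distrib]
          exact Finset.sum_congr rfl fun j _ => h1 i j
      _ = 2 * (∑ i, ∑ j, x i * a i j * y j) + 2 * (∑ i, ∑ j, y i * a i j * x j) := by
          simp only [Finset.sum_add_distrib, Finset.mul_sum]
      _ = 4 * ∑ i, ∑ j, x i * a i j * y j := by rw [hsymm]; ring
  have hsq1 : ∑ i, (p1 i) ^ 2 + ∑ i, (p2 i) ^ 2 = 2 * ∑ i, (x i) ^ 2 + 2 * ∑ i, (y i) ^ 2 := by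
    rw [← Finset.sum_add_distrib, Finset.mul_sum, Finset.mul_sum, ← Finset.sum_add_distrib]
    refine Finset.sum_congr rfl fun i _ => ?_
    simp only [hp1, hp2]; ring
  have h1 := hspec p1 hp10
  have h2 := hspec p2 hp20
  rw [hdot p1] at h1
  rw [hdot p2] at h2
  have h1' : (∑ i, ∑ j, p1 i * a i j * p1 j) ≤ lam * ∑ i, (p1 i) ^ 2 :=
    (abs_le.mp h1).2
  have h2' : -(lam * ∑ i, (p2 i) ^ 2) ≤ ∑ i, ∑ j, p2 i * a i j * p2 j :=
    (abs_le.mp h2).1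
  have hkey : 4 * ((d : ℝ) * b - (d : ℝ) * b * m / n)
      ≤ 2 * lam * (∑ i, (x i) ^ 2 + ∑ i, (y i) ^ 2) := by
    rw [← hTxy, ← hpol]
    nlinarith [h1', h2', hsq1]
  have hkey2 : (d : ℝ) * b - (d : ℝ) * b * m / n ≤ lam / 2 * (b + m) := by
    nlinarith [hxsq, hysq]
  -- |B| ≤ (λ/d) n  gives  d b m / n ≤ λ m
  have hd0 : (0:ℝ) < (d : ℝ) := by nlinarith
  have hdb : (d : ℝ) * b ≤ lam * n := by
    have := hB
    calc (d : ℝ) * b ≤ (d : ℝ) * ((lam / d) * n) := by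
          exact mul_le_mul_of_nonneg_left this hd0.le
      _ = lam * n := by field_simp
  have hdbm : (d : ℝ) * b * m / n ≤ lam * m := by
    rw [div_le_iff₀ hnpos]
    calc (d : ℝ) * b * m ≤ lam * n * m := by nlinarith
      _ = lam * m * n := by ring
  have hfinal : (d : ℝ) * b ≤ lam / 2 * b + 3 * lam / 2 * m := by
    linarith [hkey2, hdbm]
  clear hspec hdot hsymm hpol hsq1 h1 h2 h1' h2' hkey hTxy hxsq hysq hx0 hy0
  clear hp10 hp20 hsB hsN hsqB hsqN hinner hP1 hP2 hP3 hP4 hrow hcol hsa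
  clear hp1 hp2 hx hy hχB hχN ha hkey2 hdbm hdb hB
  clear p1 p2 x y χB χN a
  rw [div_mul_eq_mul_div, div_le_iff₀ (by positivity)]
  nlinarith [hfinal, mul_nonneg hb0 hd0.le, mul_nonneg hlam0.le hm0,
    mul_le_mul_of_nonneg_right hlam.le hb0]
end

section
/- Let G be a finite simple graph with maximum degree at most Δ (Δ ≥ 1), and let H be a finite simple d-regular graph on n vertices with adjacency matrix A_H satisfying |pᵀ A_H p| ≤ λ·‖p‖² for every p ∈ ℝ^n orthogonal to the all-ones vector, where 0 < λ < d/4 and d ≥ 2λΔ. Then IS(G ⊗ H) = n · IS(G); equivalently, rel-IS(G ⊗ H) = rel-IS(G). -/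
open Matrix

/-- The tensor (Kronecker) product of two simple graphs. -/
def tensorProd {V U : Type*} (G : SimpleGraph V) (H : SimpleGraph U) :
    SimpleGraph (V × U) where
  Adj a b := G.Adj a.1 b.1 ∧ H.Adj a.2 b.2
  symm := ⟨fun _ _ h => ⟨h.1.symm, h.2.symm⟩⟩
  loopless := ⟨fun _ h => G.irrefl h.1⟩

/-- `I` is an independent set of `G`: no two of its vertices are adjacent. -/
def IsIndepSet {V : Type*} (G : SimpleGraph V) (I : Finset V) : Prop :=
  ∀ u ∈ I, ∀ v ∈ I, ¬ G.Adj u v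

/-- `IS(G)`: the maximum size of an independent set of `G`. -/
noncomputable def indepNum (V : Type*) [Fintype V] (G : SimpleGraph V) : ℕ :=
  sSup {k | ∃ I : Finset V, IsIndepSet G I ∧ I.card = k}

open Finset

private lemma bilin_abs_le {U : Type*} [Fintype U] (A : Matrix U U ℝ)
    (hsymm : ∀ x y : U → ℝ, x ⬝ᵥ A *ᵥ y = y ⬝ᵥ A *ᵥ x)
    (lam : ℝ) (hlam0 : 0 ≤ lam)
    (hspec : ∀ p : U → ℝ, ∑ i, p i = 0 → |p ⬝ᵥ A *ᵥ p| ≤ lam * ∑ i, (p i) ^ 2)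
    (x y : U → ℝ) (hx : ∑ i, x i = 0) (hy : ∑ i, y i = 0) :
    |x ⬝ᵥ A *ᵥ y| ≤ lam * Real.sqrt (∑ i, (x i) ^ 2) * Real.sqrt (∑ i, (y i) ^ 2) := by
  set Sx := ∑ i, (x i) ^ 2 with hSx
  set Sy := ∑ i, (y i) ^ 2 with hSy
  have hSx0 : 0 ≤ Sx := Finset.sum_nonneg fun i _ => sq_nonneg _
  have hSy0 : 0 ≤ Sy := Finset.sum_nonneg fun i _ => sq_nonneg _
  rcases eq_or_lt_of_le hSx0 with h0 | hSxpos
  · have hx0 : ∀ i, x i = 0 := by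
      intro i
      have := (Finset.sum_eq_zero_iff_of_nonneg (fun i _ => sq_nonneg (x i))).mp h0.symm i (mem_univ i)
      exact pow_eq_zero_iff (n := 2) (by norm_num) |>.mp this
    have : x ⬝ᵥ A *ᵥ y = 0 := by simp [dotProduct, hx0]
    rw [this, abs_zero]
    positivity
  rcases eq_or_lt_of_le hSy0 with h0 | hSypos
  · have hy0 : ∀ i, y i = 0 := by
      intro i
      have := (Finset.sum_eq_zero_iff_of_nonneg (fun i _ => sq_nonneg (y i))).mp h0.symm i (mem_univ i)
      exact pow_eq_zero_iff (n := 2) (by norm_num) |>.mp this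
    have : x ⬝ᵥ A *ᵥ y = 0 := by simp [dotProduct, mulVec, hy0]
    rw [this, abs_zero]
    positivity
  set a := Real.sqrt Sx with ha
  set b := Real.sqrt Sy with hb
  have ha2 : a ^ 2 = Sx := Real.sq_sqrt hSx0
  have hb2 : b ^ 2 = Sy := Real.sq_sqrt hSy0
  have hapos : 0 < a := Real.sqrt_pos.mpr hSxpos
  have hbpos : 0 < b := Real.sqrt_pos.mpr hSypos
  set p := b • x + a • y with hp
  set q := b • x - a • y with hq
  set X := x ⬝ᵥ A *ᵥ x with hXdef
  set Y := y ⬝ᵥ A *ᵥ y with hYdef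
  set Z := x ⬝ᵥ A *ᵥ y with hZdef
  have hps : ∑ i, p i = 0 := by
    simp only [hp, Pi.add_apply, Pi.smul_apply, smul_eq_mul, Finset.sum_add_distrib,
      ← Finset.mul_sum, hx, hy, mul_zero, add_zero]
  have hqs : ∑ i, q i = 0 := by
    simp only [hq, Pi.sub_apply, Pi.smul_apply, smul_eq_mul, Finset.sum_sub_distrib,
      ← Finset.mul_sum, hx, hy, mul_zero, sub_zero]
  have hpsq : ∑ i, (p i) ^ 2 = b ^ 2 * Sx + 2 * a * b * (∑ i, x i * y i) + a ^ 2 * Sy := by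
    simp only [hp, Pi.add_apply, Pi.smul_apply, smul_eq_mul, hSx, hSy, Finset.mul_sum]
    rw [← Finset.sum_add_distrib, ← Finset.sum_add_distrib]
    exact Finset.sum_congr rfl fun i _ => by ring
  have hqsq : ∑ i, (q i) ^ 2 = b ^ 2 * Sx - 2 * a * b * (∑ i, x i * y i) + a ^ 2 * Sy := by
    simp only [hq, Pi.sub_apply, Pi.smul_apply, smul_eq_mul, hSx, hSy, Finset.mul_sum]
    rw [← Finset.sum_sub_distrib, ← Finset.sum_add_distrib]
    exact Finset.sum_congr rfl fun i _ => by ring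
  have hyx : y ⬝ᵥ A *ᵥ x = Z := (hsymm y x).trans rfl |>.trans (by rw [hZdef, hsymm])
  have hpAp : p ⬝ᵥ A *ᵥ p = b ^ 2 * X + 2 * a * b * Z + a ^ 2 * Y := by
    simp only [hp, mulVec_add, mulVec_smul, add_dotProduct, dotProduct_add, smul_dotProduct,
      dotProduct_smul, smul_eq_mul, ← hXdef, ← hYdef, ← hZdef, hyx]
    ring
  have hqAq : q ⬝ᵥ A *ᵥ q = b ^ 2 * X - 2 * a * b * Z + a ^ 2 * Y := by
    simp only [hq, mulVec_sub, mulVec_smul, sub_dotProduct, dotProduct_sub, smul_dotProduct,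
      dotProduct_smul, smul_eq_mul, ← hXdef, ← hYdef, ← hZdef, hyx]
    ring
  have h1 := hspec p hps
  have h2 := hspec q hqs
  rw [hpAp, hpsq, ← ha2, ← hb2] at h1
  rw [hqAq, hqsq, ← ha2, ← hb2] at h2
  have habs1 := abs_le.mp h1
  have habs2 := abs_le.mp h2
  have hab : (0:ℝ) < a * b := mul_pos hapos hbpos
  have key : |Z| ≤ lam * a * b := by
    rw [abs_le]
    constructor
    · have h4 : a * b * (-(lam * a * b)) ≤ a * b * Z := by linarith [habs1.1, habs2.2]
      exact (mul_le_mul_iff_right₀ hab).mp h4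
    · have h4 : a * b * Z ≤ a * b * (lam * a * b) := by linarith [habs1.2, habs2.1]
      exact (mul_le_mul_iff_right₀ hab).mp h4
  exact key

section mix
variable {U : Type*} [Fintype U] [DecidableEq U]

private lemma indSum (S : Finset U) : ∑ u, (if u ∈ S then (1:ℝ) else 0) = S.card := by
  rw [Finset.sum_boole]
  congr 1
  rw [Finset.filter_mem_eq_inter, Finset.univ_inter]

omit [DecidableEq U] in
private lemma rowSum (H : SimpleGraph U) [DecidableRel H.Adj] {d : ℕ}
    (hreg : H.IsRegularOfDegree d) (i : U) :
    ∑ j, (if H.Adj i j then (1:ℝ) else 0) = d := by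
  rw [Finset.sum_boole]
  rw [← SimpleGraph.neighborFinset_eq_filter]
  exact_mod_cast congrArg (Nat.cast (R := ℝ)) (hreg i)

private lemma mixing (H : SimpleGraph U) [DecidableRel H.Adj] (d : ℕ)
    (hreg : H.IsRegularOfDegree d) (lam : ℝ)
    (hspec : ∀ p : U → ℝ, ∑ i, p i = 0 →
      abs (p ⬝ᵥ (H.adjMatrix ℝ *ᵥ p)) ≤ lam * ∑ i, (p i) ^ 2)
    (hlam0 : 0 < lam)
    (hn : 0 < (Fintype.card U : ℝ)) (hd0 : 0 < (d : ℝ))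
    (S T : Finset U) (hST : ∀ u ∈ S, ∀ w ∈ T, ¬ H.Adj u w) :
    (d:ℝ)^2 * S.card * T.card ≤
      lam^2 * ((Fintype.card U : ℝ) - S.card) * ((Fintype.card U : ℝ) - T.card) := by
  set n := (Fintype.card U : ℝ) with hn'
  set s := (S.card : ℝ) with hs'
  set t := (T.card : ℝ) with ht'
  have hn0 : n ≠ 0 := ne_of_gt hn
  have hsn : s ≤ n := by rw [hs', hn']; exact_mod_cast Finset.card_le_univ S
  have htn : t ≤ n := by rw [ht', hn']; exact_mod_cast Finset.card_le_univ T
  have hs0 : 0 ≤ s := Nat.cast_nonneg _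
  have ht0 : 0 ≤ t := Nat.cast_nonneg _
  set x := fun u => (if u ∈ S then (1:ℝ) else 0) - s / n with hx'
  set y := fun u => (if u ∈ T then (1:ℝ) else 0) - t / n with hy'
  have hxs : ∑ i, x i = 0 := by
    simp only [hx', Finset.sum_sub_distrib, indSum, Finset.sum_const, card_univ,
      nsmul_eq_mul, ← hn', ← hs']
    field_simp
    ring
  have hys : ∑ i, y i = 0 := by
    simp only [hy', Finset.sum_sub_distrib, indSum, Finset.sum_const, card_univ,
      nsmul_eq_mul, ← hn', ← ht']
    field_simp
    ring
  have hxsq : ∑ i, (x i) ^ 2 = s * (n - s) / n := by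
    have hterm : ∀ u, (x u) ^ 2 =
        (if u ∈ S then (1:ℝ) else 0) * (1 - 2 * (s/n)) + (s/n)^2 := by
      intro u
      simp only [hx']
      by_cases h : u ∈ S <;> simp [h] <;> ring
    rw [Finset.sum_congr rfl fun u _ => hterm u]
    rw [Finset.sum_add_distrib, ← Finset.sum_mul, indSum, Finset.sum_const, card_univ,
      nsmul_eq_mul, ← hn', ← hs']
    field_simp
    ring
  have hysq : ∑ i, (y i) ^ 2 = t * (n - t) / n := by
    have hterm : ∀ u, (y u) ^ 2 =
        (if u ∈ T then (1:ℝ) else 0) * (1 - 2 * (t/n)) + (t/n)^2 := by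
      intro u
      simp only [hy']
      by_cases h : u ∈ T <;> simp [h] <;> ring
    rw [Finset.sum_congr rfl fun u _ => hterm u]
    rw [Finset.sum_add_distrib, ← Finset.sum_mul, indSum, Finset.sum_const, card_univ,
      nsmul_eq_mul, ← hn', ← ht']
    field_simp
    ring
  have hcol : ∀ j, ∑ i, (if H.Adj i j then (1:ℝ) else 0) = d := by
    intro j
    rw [← rowSum H hreg j]
    refine Finset.sum_congr rfl fun i _ => ?_
    by_cases h : H.Adj i j
    · rw [if_pos h, if_pos h.symm]
    · rw [if_neg h, if_neg fun hh => h hh.symm]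
  have hZ : x ⬝ᵥ (H.adjMatrix ℝ *ᵥ y) = -(d * s * t / n) := by
    rw [show (H.adjMatrix ℝ *ᵥ y) = (H.adjMatrix ℝ).mulVec y from rfl]
    rw [SimpleGraph.dotProduct_mulVec_adjMatrix]
    have hterm : ∀ i j, (if H.Adj i j then x i * y j else 0) =
        -(t/n) * (if H.Adj i j then (if i ∈ S then (1:ℝ) else 0) else 0)
          - (s/n) * (if H.Adj i j then (if j ∈ T then (1:ℝ) else 0) else 0)
          + (s/n) * (t/n) * (if H.Adj i j then (1:ℝ) else 0) := by
      intro i j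
      by_cases h : H.Adj i j
      · simp only [if_pos h, hx', hy']
        have hab : (if i ∈ S then (1:ℝ) else 0) * (if j ∈ T then (1:ℝ) else 0) = 0 := by
          by_cases hi : i ∈ S
          · by_cases hj : j ∈ T
            · exact absurd h (hST i hi j hj)
            · simp [hj]
          · simp [hi]
        linear_combination hab
      · simp [h]
    rw [Finset.sum_congr rfl fun i _ => Finset.sum_congr rfl fun j _ => hterm i j]
    have inner1 : ∀ i, ∑ j, (if H.Adj i j then (if i ∈ S then (1:ℝ) else 0) else 0)
        = (if i ∈ S then (1:ℝ) else 0) * d := by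
      intro i
      rw [← rowSum H hreg i, Finset.mul_sum]
      exact Finset.sum_congr rfl fun j _ => by by_cases h : H.Adj i j <;> simp [h]
    simp only [Finset.sum_add_distrib, Finset.sum_sub_distrib, ← Finset.mul_sum]
    rw [Finset.sum_congr rfl fun i _ => inner1 i]
    rw [Finset.sum_congr rfl fun i _ => rowSum H hreg i]
    have swap2 : ∑ i, ∑ j, (if H.Adj i j then (if j ∈ T then (1:ℝ) else 0) else 0)
        = ∑ j, (if j ∈ T then (1:ℝ) else 0) * d := by
      rw [Finset.sum_comm]
      refine Finset.sum_congr rfl fun j _ => ?_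
      rw [← hcol j, Finset.mul_sum]
      exact Finset.sum_congr rfl fun i _ => by by_cases h : H.Adj i j <;> simp [h]
    rw [swap2]
    rw [← Finset.sum_mul, ← Finset.sum_mul, indSum, indSum,
      Finset.sum_const, card_univ, nsmul_eq_mul, ← hn', ← hs', ← ht']
    field_simp
    ring
  have hsymm : ∀ x y : U → ℝ, x ⬝ᵥ (H.adjMatrix ℝ) *ᵥ y = y ⬝ᵥ (H.adjMatrix ℝ) *ᵥ x := by
    intro x y
    rw [show (H.adjMatrix ℝ *ᵥ y) = (H.adjMatrix ℝ).mulVec y from rfl,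
      show (H.adjMatrix ℝ *ᵥ x) = (H.adjMatrix ℝ).mulVec x from rfl,
      SimpleGraph.dotProduct_mulVec_adjMatrix, SimpleGraph.dotProduct_mulVec_adjMatrix,
      Finset.sum_comm]
    refine Finset.sum_congr rfl fun i _ => Finset.sum_congr rfl fun j _ => ?_
    by_cases h : H.Adj j i
    · rw [if_pos h, if_pos h.symm]; ring
    · rw [if_neg h, if_neg fun hh => h hh.symm]
  have habs := bilin_abs_le (H.adjMatrix ℝ) hsymm lam hlam0.le hspec x y hxs hys
  have hdstn : 0 ≤ (d:ℝ) * s * t / n :=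
    div_nonneg (mul_nonneg (mul_nonneg hd0.le hs0) ht0) hn.le
  rw [hZ, hxsq, hysq, abs_neg, abs_of_nonneg hdstn] at habs
  have hA0 : 0 ≤ s * (n - s) := mul_nonneg hs0 (by linarith)
  have hB0 : 0 ≤ t * (n - t) := mul_nonneg ht0 (by linarith)
  have habs2 : (d:ℝ) * s * t ≤ lam * Real.sqrt (s * (n - s)) * Real.sqrt (t * (n - t)) := by
    have e1 : Real.sqrt (s * (n - s) / n) = Real.sqrt (s * (n - s)) / Real.sqrt n :=
      Real.sqrt_div hA0 n
    have e2 : Real.sqrt (t * (n - t) / n) = Real.sqrt (t * (n - t)) / Real.sqrt n :=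
      Real.sqrt_div hB0 n
    rw [e1, e2] at habs
    have hsn2 : Real.sqrt n * Real.sqrt n = n := Real.mul_self_sqrt hn.le
    have habs' : (d:ℝ) * s * t / n ≤
        lam * Real.sqrt (s * (n - s)) * Real.sqrt (t * (n - t)) / n := by
      calc (d:ℝ) * s * t / n ≤ lam * (Real.sqrt (s * (n - s)) / Real.sqrt n) *
            (Real.sqrt (t * (n - t)) / Real.sqrt n) := habs
        _ = lam * Real.sqrt (s * (n - s)) * Real.sqrt (t * (n - t)) /
            (Real.sqrt n * Real.sqrt n) := by ring
        _ = lam * Real.sqrt (s * (n - s)) * Real.sqrt (t * (n - t)) / n := by rw [hsn2]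
    exact (div_le_div_iff_of_pos_right hn).mp habs'
  have hdst0 : 0 ≤ (d:ℝ) * s * t := mul_nonneg (mul_nonneg hd0.le hs0) ht0
  have h3 : ((d:ℝ) * s * t)^2 ≤ lam^2 * (s * (n - s)) * (t * (n - t)) := by
    have e : (lam * Real.sqrt (s * (n - s)) * Real.sqrt (t * (n - t)))^2 =
        lam^2 * (s * (n - s)) * (t * (n - t)) := by
      rw [mul_pow, mul_pow, Real.sq_sqrt hA0, Real.sq_sqrt hB0]
    have h6 := pow_le_pow_left₀ hdst0 habs2 2
    rw [e] at h6
    linarith [h6]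
  rcases eq_or_lt_of_le hs0 with h | hs
  · rw [← h]
    have h5 : (0:ℝ) ≤ lam^2 * (n - 0) * (n - t) :=
      mul_nonneg (mul_nonneg (sq_nonneg lam) (by linarith)) (by linarith)
    simpa using h5
  rcases eq_or_lt_of_le ht0 with h | ht
  · rw [← h]
    have h5 : (0:ℝ) ≤ lam^2 * (n - s) * (n - 0) :=
      mul_nonneg (mul_nonneg (sq_nonneg lam) (by linarith)) (by linarith)
    simpa using h5
  have hst : (0:ℝ) < s * t := mul_pos hs ht
  have h4 : ((d:ℝ)^2 * s * t) * (s * t) ≤ (lam^2 * (n - s) * (n - t)) * (s * t) := by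
    linarith [h3]
  exact le_of_mul_le_mul_right h4 hst

end mix

set_option maxHeartbeats 2000000 in
/-- Let `G` have maximum degree at most `Δ ≥ 1` and let `H` be a `d`-regular `(n,d,λ)`-graph
with `0 < λ < d/4` and `d ≥ 2λΔ`.  Then `IS(G ⊗ H) = n · IS(G)` (equivalently,
`rel-IS(G ⊗ H) = rel-IS(G)`). -/
theorem indepNum_tensorProd_eq {V U : Type*} [Fintype V] [Fintype U]
    [DecidableEq V] [DecidableEq U]
    (G : SimpleGraph V) [DecidableRel G.Adj]
    (Δ : ℕ) (hΔ1 : 1 ≤ Δ) (hdeg : ∀ v, G.degree v ≤ Δ)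
    (H : SimpleGraph U) [DecidableRel H.Adj]
    (d : ℕ) (hreg : H.IsRegularOfDegree d) (lam : ℝ)
    (hspec : ∀ p : U → ℝ, ∑ i, p i = 0 →
      abs (p ⬝ᵥ (H.adjMatrix ℝ *ᵥ p)) ≤ lam * ∑ i, (p i) ^ 2)
    (hlam0 : 0 < lam) (hlam : lam < (d : ℝ) / 4)
    (hd : 2 * lam * (Δ : ℝ) ≤ (d : ℝ)) :
    indepNum (V × U) (tensorProd G H) = Fintype.card U * indepNum V G := by
  classical
  have hemptyV : IsIndepSet G (∅ : Finset V) :=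
    fun u hu => absurd hu (Finset.notMem_empty u)
  have hemptyVU : IsIndepSet (tensorProd G H) (∅ : Finset (V × U)) :=
    fun u hu => absurd hu (Finset.notMem_empty u)
  have bddV : BddAbove {k | ∃ I : Finset V, IsIndepSet G I ∧ I.card = k} := by
    refine ⟨Fintype.card V, ?_⟩
    rintro k ⟨I, -, rfl⟩
    exact Finset.card_le_univ I
  have bddVU : BddAbove {k | ∃ I : Finset (V × U), IsIndepSet (tensorProd G H) I ∧ I.card = k} := by
    refine ⟨Fintype.card (V × U), ?_⟩
    rintro k ⟨I, -, rfl⟩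
    exact Finset.card_le_univ I
  have hneV : {k | ∃ I : Finset V, IsIndepSet G I ∧ I.card = k}.Nonempty :=
    ⟨0, ∅, hemptyV, rfl⟩
  obtain ⟨I₀, hI₀ind, hI₀card⟩ := Nat.sSup_mem hneV bddV
  have hle : ∀ J : Finset V, IsIndepSet G J → J.card ≤ indepNum V G :=
    fun J hJ => le_csSup bddV ⟨J, hJ, rfl⟩
  -- d is positive
  have hd0 : (0:ℝ) < (d:ℝ) := by linarith
  have hd0' : (d:ℝ) ≠ 0 := ne_of_gt hd0
  apply le_antisymm
  · -- upper bound
    have hneVU : {k | ∃ I : Finset (V × U), IsIndepSet (tensorProd G H) I ∧ I.card = k}.Nonempty :=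
      ⟨0, ∅, hemptyVU, rfl⟩
    apply csSup_le hneVU
    rintro k ⟨J, hJ, rfl⟩
    by_cases hU0 : Fintype.card U = 0
    · calc J.card ≤ Fintype.card (V × U) := Finset.card_le_univ J
        _ = 0 := by simp [Fintype.card_prod, hU0]
        _ ≤ _ := Nat.zero_le _
    have hn : (0:ℝ) < (Fintype.card U : ℝ) := by
      exact_mod_cast Nat.pos_of_ne_zero hU0
    set nR := (Fintype.card U : ℝ) with hnR
    -- the fibers of J
    set S : V → Finset U := fun v => Finset.univ.filter (fun u => (v, u) ∈ J) with hS
    have hmemS : ∀ v u, u ∈ S v ↔ (v, u) ∈ J := by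
      intro v u
      simp [hS]
    have hcardJ : J.card = ∑ v, (S v).card := by
      rw [Finset.card_eq_sum_card_fiberwise (f := Prod.fst) (t := Finset.univ)
        (fun x _ => Finset.mem_univ _)]
      refine Finset.sum_congr rfl fun v _ => ?_
      refine Finset.card_bij (fun a _ => a.2) ?_ ?_ ?_
      · rintro ⟨v', u⟩ ha
        obtain ⟨haJ, rfl⟩ := Finset.mem_filter.mp ha
        exact (hmemS _ u).mpr haJ
      · rintro ⟨v1, u1⟩ h1 ⟨v2, u2⟩ h2 h
        obtain ⟨-, rfl⟩ := Finset.mem_filter.mp h1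
        obtain ⟨-, rfl⟩ := Finset.mem_filter.mp h2
        simpa using h
      · intro u hu
        exact ⟨(v, u), Finset.mem_filter.mpr ⟨(hmemS v u).mp hu, rfl⟩, rfl⟩
    -- no edges between fibers of adjacent vertices
    have hedge : ∀ v w, G.Adj v w → ∀ u ∈ S v, ∀ u' ∈ S w, ¬ H.Adj u u' := by
      intro v w hvw u hu u' hu' hadj
      exact hJ (v, u) ((hmemS v u).mp hu) (w, u') ((hmemS w u').mp hu') ⟨hvw, hadj⟩
    have K : ∀ v w, G.Adj v w →
        (d:ℝ)^2 * (S v).card * (S w).card ≤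
          lam^2 * (nR - (S v).card) * (nR - (S w).card) :=
      fun v w hvw => mixing H d hreg lam hspec hlam0 hn hd0 (S v) (S w) (hedge v w hvw)
    have hcard_le : ∀ v, ((S v).card : ℝ) ≤ nR := by
      intro v
      rw [hnR]
      exact_mod_cast Finset.card_le_univ (S v)
    have hcard0 : ∀ v, (0:ℝ) ≤ ((S v).card : ℝ) := fun v => Nat.cast_nonneg _
    -- the threshold
    set τ := lam * nR / (d:ℝ) with hτ
    have hτd : (d:ℝ) * τ = lam * nR := by
      rw [hτ]; field_simp
    have hτ0 : 0 < τ := by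
      rw [hτ]; exact div_pos (mul_pos hlam0 hn) hd0
    -- the big vertices form an independent set
    set B := Finset.univ.filter (fun v => τ < ((S v).card : ℝ)) with hB
    have hBind : IsIndepSet G B := by
      intro v hv w hw hvw
      have hv' : τ < ((S v).card : ℝ) := (Finset.mem_filter.mp hv).2
      have hw' : τ < ((S w).card : ℝ) := (Finset.mem_filter.mp hw).2
      have kk := K v w hvw
      have a2 : 0 ≤ nR - ((S w).card : ℝ) := by linarith [hcard_le w]
      have a3 : 0 ≤ nR - ((S v).card : ℝ) := by linarith [hcard_le v]
      have e1 : lam^2 * (nR - ((S v).card : ℝ)) * (nR - ((S w).card : ℝ)) ≤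
          lam^2 * nR * nR := by
        apply mul_le_mul _ (by linarith [hcard0 w]) a2
          (mul_nonneg (sq_nonneg lam) hn.le)
        apply mul_le_mul_of_nonneg_left (by linarith [hcard0 v]) (sq_nonneg lam)
      have e2 : lam^2 * nR * nR = ((d:ℝ) * τ) * ((d:ℝ) * τ) := by
        rw [hτd]; ring
      have b1 : (d:ℝ) * τ < (d:ℝ) * ((S v).card : ℝ) := mul_lt_mul_of_pos_left hv' hd0
      have b2 : (d:ℝ) * τ < (d:ℝ) * ((S w).card : ℝ) := mul_lt_mul_of_pos_left hw' hd0
      have e3 : ((d:ℝ) * τ) * ((d:ℝ) * τ) < ((d:ℝ) * ((S v).card : ℝ)) * ((d:ℝ) * ((S w).card : ℝ)) :=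
        mul_lt_mul'' b1 b2 (mul_pos hd0 hτ0).le (mul_pos hd0 hτ0).le
      have e4 : ((d:ℝ) * ((S v).card : ℝ)) * ((d:ℝ) * ((S w).card : ℝ)) =
          (d:ℝ)^2 * ((S v).card : ℝ) * ((S w).card : ℝ) := by ring
      linarith [kk, e1, e2, e3, e4]
    -- a maximal independent set containing B
    set 𝒞 : Finset (Finset V) :=
      Finset.univ.filter (fun I => IsIndepSet G I ∧ B ⊆ I) with h𝒞
    have hBmem : B ∈ 𝒞 := Finset.mem_filter.mpr ⟨Finset.mem_univ _, hBind, Finset.Subset.refl B⟩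
    obtain ⟨I, hImem, hImax⟩ := Finset.exists_max_image 𝒞 Finset.card ⟨B, hBmem⟩
    obtain ⟨-, hIind, hBI⟩ := Finset.mem_filter.mp hImem
    have hmaxadj : ∀ w, w ∉ I → ∃ v ∈ I, G.Adj w v := by
      intro w hw
      by_contra hcon
      push_neg at hcon
      have hins : IsIndepSet G (insert w I) := by
        intro a ha b hb hadj
        by_cases haw : a = w
        · by_cases hbw : b = w
          · rw [haw, hbw] at hadj
            exact G.loopless.irrefl w hadj
          · have hbI : b ∈ I := (Finset.mem_insert.mp hb).resolve_left hbw
            rw [haw] at hadj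
            exact hcon b hbI hadj
        · have haI : a ∈ I := (Finset.mem_insert.mp ha).resolve_left haw
          by_cases hbw : b = w
          · rw [hbw] at hadj
            exact hcon a haI hadj.symm
          · have hbI : b ∈ I := (Finset.mem_insert.mp hb).resolve_left hbw
            exact hIind a haI b hbI hadj
      have hmem : insert w I ∈ 𝒞 := Finset.mem_filter.mpr
        ⟨Finset.mem_univ _, hins, hBI.trans (Finset.subset_insert w I)⟩
      have h1 := hImax _ hmem
      rw [Finset.card_insert_of_notMem hw] at h1
      omega
    have hchoice : ∀ w : V, ∃ v : V, w ∉ I → (v ∈ I ∧ G.Adj w v) := by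
      intro w
      by_cases hw : w ∉ I
      · obtain ⟨v, hv, ha⟩ := hmaxadj w hw
        exact ⟨v, fun _ => ⟨hv, ha⟩⟩
      · exact ⟨w, fun h => (hw h).elim⟩
    choose f hf using hchoice
    -- not-in-I vertices are small
    have hsmall : ∀ w, w ∉ I → ((S w).card : ℝ) ≤ τ := by
      intro w hw
      by_contra hcon
      push_neg at hcon
      exact hw (hBI (Finset.mem_filter.mpr ⟨Finset.mem_univ _, hcon⟩))
    -- per-vertex bound
    have hper : ∀ v ∈ I, ((S v).card : ℝ) +
        ∑ w ∈ Iᶜ.filter (fun w => f w = v), ((S w).card : ℝ) ≤ nR := by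
      intro v hvI
      set Fv := Iᶜ.filter (fun w => f w = v) with hFv
      have hFadj : ∀ w ∈ Fv, G.Adj v w := by
        intro w hw
        obtain ⟨hw1, hw2⟩ := Finset.mem_filter.mp hw
        have := (hf w (Finset.mem_compl.mp hw1)).2
        rw [hw2] at this
        exact this.symm
      have hFsmall : ∀ w ∈ Fv, ((S w).card : ℝ) ≤ τ := by
        intro w hw
        exact hsmall w (Finset.mem_compl.mp (Finset.mem_filter.mp hw).1)
      have hFcard : (Fv.card : ℝ) ≤ (Δ : ℝ) := by
        have h1 : Fv ⊆ G.neighborFinset v := by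
          intro w hw
          exact (SimpleGraph.mem_neighborFinset G v w).mpr (hFadj w hw)
        have h2 : Fv.card ≤ Δ := le_trans (Finset.card_le_card h1)
          (by rw [SimpleGraph.card_neighborFinset_eq_degree]; exact hdeg v)
        exact_mod_cast h2
      have hΔR : (1:ℝ) ≤ (Δ:ℝ) := by exact_mod_cast hΔ1
      by_cases hvB : τ < ((S v).card : ℝ)
      · -- big vertex
        have hsv0 : 0 < ((S v).card : ℝ) := lt_trans hτ0 hvB
        have hpos : (0:ℝ) < (d:ℝ)^2 * ((S v).card : ℝ) := by positivity
        set M := lam^2 * (nR - ((S v).card : ℝ)) * nR / ((d:ℝ)^2 * ((S v).card : ℝ)) with hM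
        have hnsv : (0:ℝ) ≤ nR - ((S v).card : ℝ) := by linarith [hcard_le v]
        have hM0 : 0 ≤ M := by
          rw [hM]
          exact div_nonneg (mul_nonneg (mul_nonneg (sq_nonneg lam) hnsv) hn.le) hpos.le
        have hwM : ∀ w ∈ Fv, ((S w).card : ℝ) ≤ M := by
          intro w hw
          have kk := K v w (hFadj w hw)
          have h2 : lam^2 * (nR - ((S v).card : ℝ)) * (nR - ((S w).card : ℝ)) ≤
              lam^2 * (nR - ((S v).card : ℝ)) * nR := by
            apply mul_le_mul_of_nonneg_left _ (mul_nonneg (sq_nonneg lam) hnsv)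
            linarith [hcard0 w]
          rw [hM, le_div_iff₀ hpos]
          nlinarith [kk, h2]
        have hsum : ∑ w ∈ Fv, ((S w).card : ℝ) ≤ (Δ : ℝ) * M := by
          calc ∑ w ∈ Fv, ((S w).card : ℝ) ≤ Fv.card • M :=
                Finset.sum_le_card_nsmul Fv _ M hwM
            _ = (Fv.card : ℝ) * M := nsmul_eq_mul _ _
            _ ≤ (Δ : ℝ) * M := mul_le_mul_of_nonneg_right hFcard hM0
        have hMe : (Δ:ℝ) * ((d:ℝ)^2 * ((S v).card : ℝ) * M) =
            (Δ:ℝ) * (lam^2 * (nR - ((S v).card : ℝ)) * nR) := by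
          rw [hM]
          field_simp
        -- d^2 * sv ≥ Δ * lam^2 * n
        have h7 : (Δ:ℝ) * lam^2 * nR ≤ (d:ℝ)^2 * ((S v).card : ℝ) := by
          have e1 : (d:ℝ)^2 * τ ≤ (d:ℝ)^2 * ((S v).card : ℝ) :=
            mul_le_mul_of_nonneg_left hvB.le (by positivity)
          have e2 : (d:ℝ)^2 * τ = (d:ℝ) * (lam * nR) := by
            rw [← hτd]; ring
          have e3 : (2 * lam * (Δ:ℝ)) * (lam * nR) ≤ (d:ℝ) * (lam * nR) :=
            mul_le_mul_of_nonneg_right hd (by positivity)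
          nlinarith [e1, e3, mul_nonneg (mul_nonneg hlam0.le hlam0.le) (mul_nonneg (by linarith : (0:ℝ) ≤ (Δ:ℝ)) hn.le)]
        have h8 : (Δ:ℝ) * lam^2 * nR * (nR - ((S v).card : ℝ)) ≤
            (d:ℝ)^2 * ((S v).card : ℝ) * (nR - ((S v).card : ℝ)) :=
          mul_le_mul_of_nonneg_right h7 hnsv
        have h9 : (((S v).card : ℝ) + (Δ:ℝ) * M) * ((d:ℝ)^2 * ((S v).card : ℝ)) ≤
            nR * ((d:ℝ)^2 * ((S v).card : ℝ)) := by
          nlinarith [h8, hMe]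
        have h10 : ((S v).card : ℝ) + (Δ:ℝ) * M ≤ nR := le_of_mul_le_mul_right h9 hpos
        linarith [hsum]
      · -- small vertex
        push_neg at hvB
        have hsum : ∑ w ∈ Fv, ((S w).card : ℝ) ≤ (Δ : ℝ) * τ := by
          calc ∑ w ∈ Fv, ((S w).card : ℝ) ≤ Fv.card • τ :=
                Finset.sum_le_card_nsmul Fv _ τ hFsmall
            _ = (Fv.card : ℝ) * τ := nsmul_eq_mul _ _
            _ ≤ (Δ : ℝ) * τ := mul_le_mul_of_nonneg_right hFcard hτ0.le
        -- (Δ+1) * τ ≤ n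
        have h1 : ((Δ:ℝ) + 1) * lam ≤ (d:ℝ) := by
          nlinarith [mul_nonneg hlam0.le (sub_nonneg.mpr hΔR)]
        have h2 : ((Δ:ℝ) + 1) * ((d:ℝ) * τ) ≤ (d:ℝ) * nR := by
          rw [hτd]
          nlinarith [mul_le_mul_of_nonneg_right h1 hn.le]
        have h3 : ((Δ:ℝ) + 1) * τ ≤ nR := by
          have := h2
          rw [show ((Δ:ℝ) + 1) * ((d:ℝ) * τ) = (((Δ:ℝ) + 1) * τ) * (d:ℝ) from by ring,
            show (d:ℝ) * nR = nR * (d:ℝ) from by ring] at this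
          exact le_of_mul_le_mul_right this hd0
        linarith [hsum]
    -- assemble
    have hfmap : ∀ w ∈ Iᶜ, f w ∈ I :=
      fun w hw => (hf w (Finset.mem_compl.mp hw)).1
    have htotal : (J.card : ℝ) ≤ nR * (I.card : ℝ) := by
      rw [hcardJ]
      push_cast
      rw [← Finset.sum_add_sum_compl I (fun v => ((S v).card : ℝ))]
      rw [← Finset.sum_fiberwise_of_maps_to hfmap (fun w => ((S w).card : ℝ))]
      rw [← Finset.sum_add_distrib]
      calc ∑ v ∈ I, (((S v).card : ℝ) + ∑ w ∈ Iᶜ.filter (fun w => f w = v), ((S w).card : ℝ))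
          ≤ ∑ v ∈ I, nR := Finset.sum_le_sum hper
        _ = (I.card : ℝ) * nR := by rw [Finset.sum_const, nsmul_eq_mul]
        _ = nR * (I.card : ℝ) := mul_comm _ _
    have hIα : (I.card : ℝ) ≤ (indepNum V G : ℝ) := by exact_mod_cast hle I hIind
    have hfinal : (J.card : ℝ) ≤ (Fintype.card U : ℝ) * (indepNum V G : ℝ) := by
      calc (J.card : ℝ) ≤ nR * (I.card : ℝ) := htotal
        _ ≤ nR * (indepNum V G : ℝ) := mul_le_mul_of_nonneg_left hIα hn.le
        _ = (Fintype.card U : ℝ) * (indepNum V G : ℝ) := by rw [hnR]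
    exact_mod_cast hfinal
  · -- lower bound
    apply le_csSup bddVU
    refine ⟨I₀ ×ˢ Finset.univ, ?_, ?_⟩
    · rintro ⟨u, i⟩ hu ⟨v, j⟩ hv hadj
      exact hI₀ind u (Finset.mem_product.mp hu).1 v (Finset.mem_product.mp hv).1 hadj.1
    · rw [Finset.card_product, Finset.card_univ, hI₀card, Nat.mul_comm]
      rfl
end
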